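/- Let G = K_1 ∨ (C_{k_1} ∪ C_{k_2} ∪ ⋯ ∪ C_{k_t} ∪ qK_2 ∪ sK_1) with t, q, s ≥ 1 and k_i ≥ 3 for 1 ≤ i ≤ t, and let n be the order of G. Then Σ_{v ∈ V(G)} t_G(v)·d_G(v) = (n+5)(n−s−1) − q(n+7) + 9·|{i : 1 ≤ i ≤ t, k_i = 3}|, where t_G(v) is the number of triangles of G containing v and d_G(v) is the degree of v. In particular, if k_i ≠ 3 for all i, then this sum equals (n+5)(n−s−1) − q(n+7). -/

import Mathlib

open SimpleGraph Finset

namespace Paper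

/-- The cone `K₁ ∨ G`: a new apex vertex (`none`) joined to every vertex of `G`. -/
def cone {V : Type*} (G : SimpleGraph V) : SimpleGraph (Option V) where
  Adj x y :=
    match x, y with
    | none, none => False
    | none, some _ => True
    | some _, none => True
    | some a, some b => G.Adj a b
  symm := by
    refine ⟨?_⟩
    rintro (_ | a) (_ | b) h
    · exact h
    · exact trivial
    · exact trivial
    · exact G.adj_symm h
  loopless := by
    refine ⟨?_⟩
    rintro (_ | a) h
    · exact h
    · exact G.loopless.irrefl a h

/-- Disjoint union of an indexed family of graphs. -/
def sigmaGraph {ι : Type*} {V : ι → Type*} (G : ∀ i, SimpleGraph (V i)) :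
    SimpleGraph (Σ i, V i) where
  Adj x y := ∃ (i : ι) (u v : V i), x = ⟨i, u⟩ ∧ y = ⟨i, v⟩ ∧ (G i).Adj u v
  symm := by
    refine ⟨?_⟩
    rintro x y ⟨i, u, v, rfl, rfl, h⟩
    exact ⟨i, v, u, rfl, rfl, (G i).adj_symm h⟩
  loopless := by
    refine ⟨?_⟩
    rintro x ⟨i, u, v, rfl, h2, h⟩
    injection h2 with h3 h4
    subst h4
    exact (G i).loopless.irrefl u h

/-- `q` disjoint copies of `K₂`. -/
def K2s (q : ℕ) : SimpleGraph (Σ _ : Fin q, Fin 2) :=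
  sigmaGraph fun _ => (⊤ : SimpleGraph (Fin 2))

/-- The signless Laplacian matrix `Q(G) = D(G) + A(G)`. -/
noncomputable def QMatrix {V : Type*} [Fintype V] (G : SimpleGraph V) : Matrix V V ℝ :=
  letI := Classical.decEq V
  letI := Classical.decRel G.Adj
  Matrix.diagonal (fun v => (G.degree v : ℝ)) + G.adjMatrix ℝ

/-- The signless Laplacian spectrum, as the multiset of roots of the characteristic
polynomial of `Q(G)` (with multiplicity). -/
noncomputable def Qspectrum {V : Type*} [Fintype V] (G : SimpleGraph V) : Multiset ℝ :=
  letI := Classical.decEq V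
  (QMatrix G).charpoly.roots

/-- Multiplicity of `ρ` as a signless Laplacian eigenvalue of `G`. -/
noncomputable def Qmult {V : Type*} [Fintype V] (G : SimpleGraph V) (ρ : ℝ) : ℕ :=
  (Qspectrum G).count ρ

/-- The `i`-th largest signless Laplacian eigenvalue (1-indexed), i.e. `χ_i(G)`. -/
noncomputable def Qeig {V : Type*} [Fintype V] (G : SimpleGraph V) (i : ℕ) : ℝ :=
  (((Qspectrum G).sort (· ≤ ·)).reverse).getD (i - 1) 0

/-- `G` is determined by its signless Laplacian spectrum. -/
def IsDQS {V : Type*} [Fintype V] (G : SimpleGraph V) : Prop :=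
  ∀ (W : Type) [Fintype W] (F : SimpleGraph W),
    Qspectrum F = Qspectrum G → Nonempty (F ≃g G)

/-- The number of subgraphs of `G` isomorphic to `H`. -/
noncomputable def subgraphCount {V W : Type*} (G : SimpleGraph V) (H : SimpleGraph W) : ℕ :=
  Nat.card {H' : G.Subgraph // Nonempty (H'.coe ≃g H)}

/-- The number of triangle subgraphs of `G` containing a vertex `v`. -/
noncomputable def triangleCountAt {V : Type*} (G : SimpleGraph V) (v : V) : ℕ :=
  Nat.card {H' : G.Subgraph //
    v ∈ H'.verts ∧ Nonempty (H'.coe ≃g (⊤ : SimpleGraph (Fin 3)))}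

/-- Vertex degree (with classical decidability). -/
noncomputable def deg {V : Type*} [Fintype V] (G : SimpleGraph V) (v : V) : ℕ :=
  letI := Classical.decRel G.Adj
  G.degree v

/-- The multiset of vertex degrees of `G`. -/
noncomputable def degreeMultiset {V : Type*} [Fintype V] (G : SimpleGraph V) : Multiset ℕ :=
  (Finset.univ : Finset V).val.map fun v => deg G v

/-- The maximum vertex degree of `G`. -/
noncomputable def maxDeg {V : Type*} [Fintype V] (G : SimpleGraph V) : ℕ :=
  letI := Classical.decRel G.Adj
  G.maxDegree

/-- `S_r(G) = trace(A(G)^r)`, the `r`-th spectral moment. -/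
noncomputable def Smoment {V : Type*} [Fintype V] (G : SimpleGraph V) (r : ℕ) : ℝ :=
  letI := Classical.decEq V
  letI := Classical.decRel G.Adj
  ((G.adjMatrix ℝ) ^ r).trace

/-- `T_r(G) = trace(Q(G)^r)`, the `r`-th signless Laplacian spectral moment. -/
noncomputable def Tmoment {V : Type*} [Fintype V] (G : SimpleGraph V) (r : ℕ) : ℝ :=
  letI := Classical.decEq V
  ((QMatrix G) ^ r).trace

/-- `∑_{uv ∈ E(G)} d_G(u) d_G(v)`. -/
noncomputable def edgeDegSum {V : Type*} [Fintype V] (G : SimpleGraph V) : ℕ :=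
  letI := Classical.decEq V
  letI := Classical.decRel G.Adj
  ∑ e ∈ G.edgeFinset,
    Sym2.lift ⟨fun u v => G.degree u * G.degree v, fun _ _ => Nat.mul_comm _ _⟩ e

/-- The coalescence of `G` at `v` with the apex of `K₁ ∨ r K₂`: add `2r` new vertices
`a_i, b_i` and edges `a_i b_i`, `v a_i`, `v b_i`. -/
def coalescenceK2s {V : Type*} (G : SimpleGraph V) (v : V) (r : ℕ) :
    SimpleGraph (V ⊕ (Fin r × Fin 2)) where
  Adj x y :=
    match x, y with
    | Sum.inl a, Sum.inl b => G.Adj a b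
    | Sum.inl a, Sum.inr _ => a = v
    | Sum.inr _, Sum.inl b => b = v
    | Sum.inr p, Sum.inr p' => p.1 = p'.1 ∧ p.2 ≠ p'.2
  symm := by
    refine ⟨?_⟩
    rintro (a | p) (b | p') h
    · exact G.adj_symm h
    · exact h
    · exact h
    · exact ⟨h.1.symm, h.2.symm⟩
  loopless := by
    refine ⟨?_⟩
    rintro (a | p) h
    · exact G.loopless.irrefl a h
    · exact h.2 rfl


/-- `K₁ ∨ (C_{k 0} ∪ ⋯ ∪ C_{k (t-1)} ∪ q K₂ ∪ s K₁)`. -/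
def coneCycles {t : ℕ} (k : Fin t → ℕ) (q s : ℕ) :
    SimpleGraph (Option ((Σ i, Fin (k i)) ⊕ ((Σ _ : Fin q, Fin 2) ⊕ Fin s))) :=
  cone ((sigmaGraph fun i => cycleGraph (k i)) ⊕g (K2s q ⊕g (⊥ : SimpleGraph (Fin s))))

/-- `K₁ ∨ (C_k ∪ q K₂ ∪ s K₁)`. -/
def coneOneCycle (k q s : ℕ) :
    SimpleGraph (Option (Fin k ⊕ ((Σ _ : Fin q, Fin 2) ⊕ Fin s))) :=
  cone (cycleGraph k ⊕g (K2s q ⊕g (⊥ : SimpleGraph (Fin s))))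

/-- `K₁ ∨ (C₄ ∪ P_{k-3} ∪ P₃ ∪ (q-2) K₂ ∪ s K₁)`. -/
def coneAlt (k q s : ℕ) :
    SimpleGraph (Option (Fin 4 ⊕ (Fin (k - 3) ⊕ (Fin 3 ⊕ ((Σ _ : Fin (q - 2), Fin 2) ⊕ Fin s))))) :=
  cone (cycleGraph 4 ⊕g (pathGraph (k - 3) ⊕g (pathGraph 3 ⊕g
    (K2s (q - 2) ⊕g (⊥ : SimpleGraph (Fin s))))))

/-- `K₁ ∨ (C₃ ∪ C_{k 0} ∪ ⋯ ∪ C_{k (t'-1)} ∪ q K₂ ∪ s K₁)`. -/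
def coneC3Cycles {t' : ℕ} (k : Fin t' → ℕ) (q s : ℕ) :
    SimpleGraph (Option (Fin 3 ⊕ ((Σ i, Fin (k i)) ⊕ ((Σ _ : Fin q, Fin 2) ⊕ Fin s)))) :=
  cone (cycleGraph 3 ⊕g ((sigmaGraph fun i => cycleGraph (k i)) ⊕g
    (K2s q ⊕g (⊥ : SimpleGraph (Fin s)))))

/-- `K₁ ∨ (K_{1,3} ∪ C_{k 0} ∪ ⋯ ∪ C_{k (t'-1)} ∪ q K₂ ∪ s' K₁)`. -/
def coneStar {t' : ℕ} (k : Fin t' → ℕ) (q s' : ℕ) :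
    SimpleGraph (Option ((Fin 1 ⊕ Fin 3) ⊕ ((Σ i, Fin (k i)) ⊕ ((Σ _ : Fin q, Fin 2) ⊕ Fin s')))) :=
  cone (completeBipartiteGraph (Fin 1) (Fin 3) ⊕g ((sigmaGraph fun i => cycleGraph (k i)) ⊕g
    (K2s q ⊕g (⊥ : SimpleGraph (Fin s')))))

/-- `K₁ ∨ (P_{l 0} ∪ ⋯ ∪ P_{l (q-1)} ∪ s K₁)`. -/
def conePaths {q : ℕ} (l : Fin q → ℕ) (s : ℕ) :
    SimpleGraph (Option ((Σ i, Fin (l i)) ⊕ Fin s)) :=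
  cone ((sigmaGraph fun i => pathGraph (l i)) ⊕g (⊥ : SimpleGraph (Fin s)))

/-- `K₁ ∨ (C_{k 0} ∪ ⋯ ∪ C_{k (z-1)} ∪ P_{l 0} ∪ ⋯ ∪ P_{l (q-1)} ∪ s K₁)`. -/
def coneCyclesPaths {z q : ℕ} (k : Fin z → ℕ) (l : Fin q → ℕ) (s : ℕ) :
    SimpleGraph (Option ((Σ i, Fin (k i)) ⊕ ((Σ i, Fin (l i)) ⊕ Fin s))) :=
  cone ((sigmaGraph fun i => cycleGraph (k i)) ⊕g
    ((sigmaGraph fun i => pathGraph (l i)) ⊕g (⊥ : SimpleGraph (Fin s))))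

/-- The quartic polynomial `p_{n,q,s}` from the paper. -/
noncomputable def quartic (n q s : ℕ) (x : ℝ) : ℝ :=
  x ^ 4 - ((n : ℝ) + 8) * x ^ 3 + (8 * (n : ℝ) + 15) * x ^ 2
    + (4 * (q : ℝ) + 4 * (s : ℝ) - 19 * (n : ℝ) + 4) * x
    + (12 * (n : ℝ) - 4 * (q : ℝ) - 12 * (s : ℝ) - 12)

/-- The multiset `{3 + 2 cos (2jπ/k_i) : 1 ≤ j ≤ k_i - 1, 1 ≤ i ≤ t}`. -/
noncomputable def cycleEigs {t : ℕ} (k : Fin t → ℕ) : Multiset ℝ :=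
  ∑ i : Fin t, (Multiset.range (k i - 1)).map
    (fun j => 3 + 2 * Real.cos (2 * ((j : ℝ) + 1) * Real.pi / (k i : ℝ)))

open Fin.NatCast Fin.CommRing

section CountLemmas

variable {V : Type*} [Fintype V] [DecidableEq V] (G : SimpleGraph V) [DecidableRel G.Adj]

/-- The triangle subgraph on a clique finset. -/
def triSub (s : Finset V) : G.Subgraph where
  verts := ↑s
  Adj a b := G.Adj a b ∧ a ∈ s ∧ b ∈ s
  adj_sub h := h.1
  edge_vert h := h.2.1
  symm := ⟨fun a b h => ⟨h.1.symm, h.2.2, h.2.1⟩⟩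

lemma triangleCountAt_eq' (v : V) :
    triangleCountAt G v
      = (((univ : Finset (Finset V))).filter fun s => v ∈ s ∧ G.IsNClique 3 s).card := by
  classical
  have key : ∀ (H' : G.Subgraph), (H'.coe ≃g (⊤ : SimpleGraph (Fin 3))) →
      (H'.verts.toFinset.card = 3 ∧ ∀ a b, a ∈ H'.verts → b ∈ H'.verts → a ≠ b → H'.Adj a b) := by
    intro H' φ
    constructor
    · rw [Set.toFinset_card]
      rw [Fintype.card_congr φ.toEquiv, Fintype.card_fin]
    · intro a b ha hb hne
      have : (⊤ : SimpleGraph (Fin 3)).Adj (φ ⟨a, ha⟩) (φ ⟨b, hb⟩) := by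
        rw [top_adj]
        intro h
        exact hne (congrArg Subtype.val (φ.injective h))
      rw [φ.map_adj_iff] at this
      exact this
  have f : ∀ s : Finset V, v ∈ s ∧ G.IsNClique 3 s →
      (v ∈ (triSub G s).verts ∧ Nonempty ((triSub G s).coe ≃g (⊤ : SimpleGraph (Fin 3)))) := by
    intro s ⟨hv, hs⟩
    refine ⟨by exact_mod_cast hv, ?_⟩
    have hcard : Fintype.card ↥(triSub G s).verts = 3 := by
      rw [← hs.2]
      convert Fintype.card_ofFinset s (p := (triSub G s).verts) (fun _ => Iff.rfl)
    refine ⟨⟨Fintype.equivFinOfCardEq hcard, ?_⟩⟩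
    intro x y
    simp only [top_adj, Subgraph.coe_adj]
    constructor
    · intro h
      have hxy : x ≠ y := fun h' => h (by rw [h'])
      have hxy' : (x : V) ≠ (y : V) := fun h' => hxy (Subtype.ext h')
      exact ⟨hs.1 x.2 y.2 hxy', x.2, y.2⟩
    · intro h hc
      exact (G.ne_of_adj h.1) (congrArg Subtype.val ((Fintype.equivFinOfCardEq hcard).injective hc))
  have e : {s : Finset V // v ∈ s ∧ G.IsNClique 3 s} ≃
      {H' : G.Subgraph // v ∈ H'.verts ∧ Nonempty (H'.coe ≃g (⊤ : SimpleGraph (Fin 3)))} := by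
    refine Equiv.ofBijective (fun s => ⟨triSub G s.1, f s.1 s.2⟩) ⟨?_, ?_⟩
    · intro s₁ s₂ h
      have : (triSub G s₁.1).verts = (triSub G s₂.1).verts := by
        simp only [Subtype.ext_iff] at h; rw [h]
      exact Subtype.ext (Finset.coe_injective this)
    · rintro ⟨H', hv, ⟨φ⟩⟩
      obtain ⟨hcard, hadj⟩ := key H' φ
      refine ⟨⟨H'.verts.toFinset, Set.mem_toFinset.2 hv, ?_⟩, ?_⟩
      · refine ⟨?_, hcard⟩
        intro a ha b hb hne
        rw [Finset.mem_coe, Set.mem_toFinset] at ha hb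
        exact H'.adj_sub (hadj a b ha hb hne)
      · refine Subtype.ext ?_
        ext a b
        · simp [triSub]
        · simp only [triSub]
          constructor
          · rintro ⟨hGab, ha, hb⟩
            rw [Set.mem_toFinset] at ha hb
            exact hadj a b ha hb (G.ne_of_adj hGab)
          · intro h
            exact ⟨H'.adj_sub h, Set.mem_toFinset.2 (H'.edge_vert h),
              Set.mem_toFinset.2 (H'.edge_vert h.symm)⟩
  rw [triangleCountAt, Nat.card_congr e.symm, Nat.card_eq_fintype_card,
    Fintype.card_subtype]


lemma tri_filter_card (v : V) :
    ((univ : Finset (Finset V)).filter fun s => v ∈ s ∧ G.IsNClique 3 s).card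
      = (((G.neighborFinset v).powersetCard 2).filter
          (fun p => ∀ a ∈ p, ∀ b ∈ p, a ≠ b → G.Adj a b)).card := by
  refine Finset.card_bij' (fun s _ => s.erase v) (fun p _ => insert v p) ?_ ?_ ?_ ?_
  · intro s hs
    simp only [mem_filter, mem_univ, true_and] at hs
    obtain ⟨hv, hs⟩ := hs
    simp only [mem_filter, mem_powersetCard]
    refine ⟨⟨?_, ?_⟩, ?_⟩
    · intro x hx
      rw [mem_erase] at hx
      rw [SimpleGraph.mem_neighborFinset]
      exact hs.1 hv (by exact_mod_cast hx.2) (Ne.symm hx.1)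
    · rw [Finset.card_erase_of_mem hv, hs.2]
    · intro a ha b hb hab
      rw [mem_erase] at ha hb
      exact hs.1 (by exact_mod_cast ha.2) (by exact_mod_cast hb.2) hab
  · intro p hp
    simp only [mem_filter, mem_powersetCard] at hp
    obtain ⟨⟨hsub, hcard⟩, hadj⟩ := hp
    have hvp : v ∉ p := fun h => G.irrefl ((G.mem_neighborFinset v v).1 (hsub h))
    simp only [mem_filter, mem_univ, true_and]
    refine ⟨mem_insert_self v p, ?_, ?_⟩
    · intro a ha b hb hab
      simp only [coe_insert, Set.mem_insert_iff, mem_coe] at ha hb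
      rcases ha with rfl | ha
      · rcases hb with rfl | hb
        · exact absurd rfl hab
        · exact (G.mem_neighborFinset _ b).1 (hsub hb)
      · rcases hb with rfl | hb
        · exact ((G.mem_neighborFinset _ a).1 (hsub ha)).symm
        · exact hadj a ha b hb hab
    · rw [Finset.card_insert_of_notMem hvp, hcard]
  · intro s hs
    simp only [mem_filter, mem_univ, true_and] at hs
    exact Finset.insert_erase hs.1
  · intro p hp
    simp only [mem_filter, mem_powersetCard] at hp
    have hvp : v ∉ p := fun h => G.irrefl ((G.mem_neighborFinset v v).1 (hp.1.1 h))
    exact Finset.erase_insert hvp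

lemma tri_pc_one (v y0 : V) (hN : G.neighborFinset v = {y0}) :
    (((G.neighborFinset v).powersetCard 2).filter
        (fun p => ∀ a ∈ p, ∀ b ∈ p, a ≠ b → G.Adj a b)).card = 0 := by
  rw [Finset.card_eq_zero]
  rw [Finset.eq_empty_iff_forall_notMem]
  intro p hp
  simp only [mem_filter, mem_powersetCard, hN] at hp
  have := Finset.card_le_card hp.1.1
  simp [hp.1.2] at this

lemma tri_pc_two (v y0 y1 : V) (hN : G.neighborFinset v = {y0, y1}) (h01 : G.Adj y0 y1) :
    (((G.neighborFinset v).powersetCard 2).filter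
        (fun p => ∀ a ∈ p, ∀ b ∈ p, a ≠ b → G.Adj a b)).card = 1 := by
  have hne : y0 ≠ y1 := G.ne_of_adj h01
  rw [Finset.card_eq_one]
  refine ⟨{y0, y1}, ?_⟩
  ext p
  simp only [mem_filter, mem_powersetCard, hN, mem_singleton]
  constructor
  · rintro ⟨⟨hsub, hcard⟩, -⟩
    refine Finset.eq_of_subset_of_card_le hsub ?_
    rw [hcard, Finset.card_pair hne]
  · rintro rfl
    refine ⟨⟨subset_rfl, Finset.card_pair hne⟩, ?_⟩
    intro a ha b hb hab
    simp only [mem_insert, mem_singleton] at ha hb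
    rcases ha with rfl | rfl <;> rcases hb with rfl | rfl
    · exact absurd rfl hab
    · exact h01
    · exact h01.symm
    · exact absurd rfl hab

lemma tri_pc_three (v y0 y1 y2 : V) (hN : G.neighborFinset v = {y0, y1, y2})
    (h01 : G.Adj y0 y1) (h02 : G.Adj y0 y2) (h12 : y1 ≠ y2) :
    (((G.neighborFinset v).powersetCard 2).filter
        (fun p => ∀ a ∈ p, ∀ b ∈ p, a ≠ b → G.Adj a b)).card
      = if G.Adj y1 y2 then 3 else 2 := by
  have h01' : y0 ≠ y1 := G.ne_of_adj h01
  have h02' : y0 ≠ y2 := G.ne_of_adj h02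
  have key : ∀ p : Finset V, p ⊆ {y0, y1, y2} → p.card = 2 →
      p = {y0, y1} ∨ p = {y0, y2} ∨ p = {y1, y2} := by
    intro p hsub hcard
    obtain ⟨a, b, hab, rfl⟩ := Finset.card_eq_two.1 hcard
    have ha := hsub (mem_insert_self a {b})
    have hb := hsub (Finset.mem_insert_of_mem (Finset.mem_singleton_self b))
    simp only [mem_insert, mem_singleton] at ha hb
    rcases ha with rfl | rfl | rfl <;> rcases hb with rfl | rfl | rfl <;>
      first
        | exact absurd rfl hab
        | simp [Finset.pair_comm]
  have mem12 : ∀ x, x ∈ ({y1, y2} : Finset V) → G.Adj y1 y2 →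
      ∀ y ∈ ({y1, y2} : Finset V), x ≠ y → G.Adj x y := by
    intro x hx hA y hy hxy
    simp only [mem_insert, mem_singleton] at hx hy
    rcases hx with rfl | rfl <;> rcases hy with rfl | rfl
    · exact absurd rfl hxy
    · exact hA
    · exact hA.symm
    · exact absurd rfl hxy
  by_cases hA : G.Adj y1 y2
  · rw [if_pos hA]
    have : (((G.neighborFinset v).powersetCard 2).filter
        (fun p => ∀ a ∈ p, ∀ b ∈ p, a ≠ b → G.Adj a b))
        = {({y0, y1} : Finset V), {y0, y2}, {y1, y2}} := by
      ext p
      simp only [mem_filter, mem_powersetCard, hN, mem_insert, mem_singleton]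
      constructor
      · rintro ⟨⟨hsub, hcard⟩, -⟩
        exact key p hsub hcard
      · rintro (rfl | rfl | rfl)
        · refine ⟨⟨?_, Finset.card_pair h01'⟩, ?_⟩
          · intro x hx; simp only [mem_insert, mem_singleton] at hx ⊢; tauto
          · intro a ha b hb hab
            simp only [mem_insert, mem_singleton] at ha hb
            rcases ha with rfl | rfl <;> rcases hb with rfl | rfl <;>
              first | exact absurd rfl hab | exact h01 | exact h01.symm
        · refine ⟨⟨?_, Finset.card_pair h02'⟩, ?_⟩
          · intro x hx; simp only [mem_insert, mem_singleton] at hx ⊢; tauto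
          · intro a ha b hb hab
            simp only [mem_insert, mem_singleton] at ha hb
            rcases ha with rfl | rfl <;> rcases hb with rfl | rfl <;>
              first | exact absurd rfl hab | exact h02 | exact h02.symm
        · refine ⟨⟨?_, Finset.card_pair h12⟩, ?_⟩
          · intro x hx; simp only [mem_insert, mem_singleton] at hx ⊢; tauto
          · intro a ha b hb hab
            simp only [mem_insert, mem_singleton] at ha hb
            rcases ha with rfl | rfl <;> rcases hb with rfl | rfl <;>
              first | exact absurd rfl hab | exact hA | exact hA.symm
    rw [this]
    rw [Finset.card_insert_of_notMem, Finset.card_insert_of_notMem, Finset.card_singleton]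
    · simp only [mem_singleton]
      intro h
      have : y0 ∈ ({y1, y2} : Finset V) := h ▸ (mem_insert_self y0 {y2})
      simp only [mem_insert, mem_singleton] at this
      tauto
    · simp only [mem_insert, mem_singleton]
      push_neg
      constructor
      · intro h
        have : y1 ∈ ({y0, y2} : Finset V) := h ▸ (by simp)
        simp only [mem_insert, mem_singleton] at this
        tauto
      · intro h
        have : y0 ∈ ({y1, y2} : Finset V) := h ▸ (mem_insert_self y0 {y1})
        simp only [mem_insert, mem_singleton] at this
        tauto
  · rw [if_neg hA]
    have : (((G.neighborFinset v).powersetCard 2).filter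
        (fun p => ∀ a ∈ p, ∀ b ∈ p, a ≠ b → G.Adj a b))
        = {({y0, y1} : Finset V), {y0, y2}} := by
      ext p
      simp only [mem_filter, mem_powersetCard, hN, mem_insert, mem_singleton]
      constructor
      · rintro ⟨⟨hsub, hcard⟩, hadj⟩
        rcases key p hsub hcard with rfl | rfl | rfl
        · left; rfl
        · right; rfl
        · exact absurd (hadj y1 (by simp) y2 (by simp) h12) hA
      · rintro (rfl | rfl)
        · refine ⟨⟨?_, Finset.card_pair h01'⟩, ?_⟩
          · intro x hx; simp only [mem_insert, mem_singleton] at hx ⊢; tauto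
          · intro a ha b hb hab
            simp only [mem_insert, mem_singleton] at ha hb
            rcases ha with rfl | rfl <;> rcases hb with rfl | rfl <;>
              first | exact absurd rfl hab | exact h01 | exact h01.symm
        · refine ⟨⟨?_, Finset.card_pair h02'⟩, ?_⟩
          · intro x hx; simp only [mem_insert, mem_singleton] at hx ⊢; tauto
          · intro a ha b hb hab
            simp only [mem_insert, mem_singleton] at ha hb
            rcases ha with rfl | rfl <;> rcases hb with rfl | rfl <;>
              first | exact absurd rfl hab | exact h02 | exact h02.symm
    rw [this]
    rw [Finset.card_insert_of_notMem, Finset.card_singleton]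
    simp only [mem_singleton]
    intro h
    have : y1 ∈ ({y0, y2} : Finset V) := h ▸ (by simp)
    simp only [mem_insert, mem_singleton] at this
    tauto


end CountLemmas

section Helpers

variable {W : Type*} {H : SimpleGraph W}

@[simp] lemma cone_adj_some_none (a : W) : (cone H).Adj (some a) none := trivial
@[simp] lemma cone_adj_none_some (a : W) : (cone H).Adj none (some a) := trivial
@[simp] lemma cone_adj_some_some (a b : W) : (cone H).Adj (some a) (some b) ↔ H.Adj a b := Iff.rfl
@[simp] lemma cone_adj_none_none : ¬ (cone H).Adj none none := id

lemma deg_eq {V : Type*} [Fintype V] (G : SimpleGraph V) [DecidableRel G.Adj] (v : V) :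
    deg G v = G.degree v := by
  unfold deg
  congr!

lemma sigmaGraph_adj_mk {ι : Type*} {Vf : ι → Type*} (Gs : ∀ i, SimpleGraph (Vf i))
    {i : ι} {u w : Vf i} : (sigmaGraph Gs).Adj ⟨i, u⟩ ⟨i, w⟩ ↔ (Gs i).Adj u w := by
  constructor
  · rintro ⟨i', u', v', h1, h2, h⟩
    have hi : i = i' := congrArg Sigma.fst h1
    subst hi
    have hu : u = u' := sigma_mk_injective h1
    have hw : w = v' := sigma_mk_injective h2
    rw [hu, hw]
    exact h
  · intro h
    exact ⟨i, u, w, rfl, rfl, h⟩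

lemma deg_cone_none [Fintype W] : deg (cone H) none = Fintype.card W := by
  classical
  rw [deg_eq]
  rw [SimpleGraph.degree]
  have : (cone H).neighborFinset none = univ.image some := by
    ext x
    cases x <;> simp [SimpleGraph.mem_neighborFinset]
  rw [this, Finset.card_image_of_injective _ (Option.some_injective W), Finset.card_univ]

lemma cone_neighborFinset_some [Fintype W] [DecidableEq W] [DecidableRel H.Adj]
    [Fintype ((cone H).neighborSet (some w))] [Fintype (H.neighborSet w)] :
    (cone H).neighborFinset (some w) = insert none ((H.neighborFinset w).image some) := by
  ext x
  cases x <;> simp [SimpleGraph.mem_neighborFinset]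

lemma deg_cone_some [Fintype W] (w : W) : deg (cone H) (some w) = deg H w + 1 := by
  classical
  rw [deg_eq, deg_eq]
  rw [SimpleGraph.degree, SimpleGraph.degree, cone_neighborFinset_some,
    Finset.card_insert_of_notMem (by simp),
    Finset.card_image_of_injective _ (Option.some_injective W)]

lemma deg_sum_inl {α β : Type*} [Fintype α] [Fintype β] (A : SimpleGraph α) (B : SimpleGraph β)
    (a : α) : deg (A ⊕g B) (Sum.inl a) = deg A a := by
  classical
  rw [deg_eq, deg_eq, SimpleGraph.degree, SimpleGraph.degree]
  have : (A ⊕g B).neighborFinset (Sum.inl a) = (A.neighborFinset a).image Sum.inl := by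
    ext x
    cases x <;> simp [SimpleGraph.mem_neighborFinset]
  convert (congrArg Finset.card this).trans (Finset.card_image_of_injective _ Sum.inl_injective)

lemma deg_sum_inr {α β : Type*} [Fintype α] [Fintype β] (A : SimpleGraph α) (B : SimpleGraph β)
    (b : β) : deg (A ⊕g B) (Sum.inr b) = deg B b := by
  classical
  rw [deg_eq, deg_eq, SimpleGraph.degree, SimpleGraph.degree]
  have : (A ⊕g B).neighborFinset (Sum.inr b) = (B.neighborFinset b).image Sum.inr := by
    ext x
    cases x <;> simp [SimpleGraph.mem_neighborFinset]
  convert (congrArg Finset.card this).trans (Finset.card_image_of_injective _ Sum.inr_injective)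

lemma deg_sigma {ι : Type*} [Fintype ι] [DecidableEq ι] {Vf : ι → Type*} [∀ i, Fintype (Vf i)]
    (Gs : ∀ i, SimpleGraph (Vf i)) (i : ι) (u : Vf i) :
    deg (sigmaGraph Gs) ⟨i, u⟩ = deg (Gs i) u := by
  classical
  rw [deg_eq, deg_eq, SimpleGraph.degree, SimpleGraph.degree]
  have : (sigmaGraph Gs).neighborFinset ⟨i, u⟩
      = ((Gs i).neighborFinset u).image (fun w => (⟨i, w⟩ : Σ i, Vf i)) := by
    ext x
    rcases x with ⟨j, w⟩
    simp only [SimpleGraph.mem_neighborFinset, Finset.mem_image]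
    constructor
    · rintro ⟨i', u', v', h1, h2, hadj⟩
      have hi : i = i' := congrArg Sigma.fst h1
      subst hi
      have hu : u = u' := sigma_mk_injective h1
      subst hu
      have hj : j = i := congrArg Sigma.fst h2
      subst hj
      have hw : w = v' := sigma_mk_injective h2
      refine ⟨w, ?_, rfl⟩
      rw [hw]
      exact hadj
    · rintro ⟨w', hw', h⟩
      have hj : i = j := congrArg Sigma.fst h
      subst hj
      have hw : w' = w := sigma_mk_injective h
      subst hw
      exact ⟨i, u, w', rfl, rfl, hw'⟩
  rw [this, Finset.card_image_of_injective _ sigma_mk_injective]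

lemma deg_bot {α : Type*} [Fintype α] (a : α) : deg (⊥ : SimpleGraph α) a = 0 := by
  rw [deg_eq]
  exact SimpleGraph.bot_degree a

lemma deg_top_fin2 (x : Fin 2) : deg (⊤ : SimpleGraph (Fin 2)) x = 1 := by
  rw [deg_eq]
  revert x
  decide

lemma deg_K2s (q : ℕ) (j : Fin q) (x : Fin 2) : deg (K2s q) ⟨j, x⟩ = 1 := by
  rw [K2s, deg_sigma, deg_top_fin2]

lemma deg_cycle {n : ℕ} (hn : 3 ≤ n) (v : Fin n) : deg (cycleGraph n) v = 2 := by
  match n, hn with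
  | (m + 3), _ =>
    rw [deg_eq]
    exact cycleGraph_degree_three_le

end Helpers

section Cycle

variable {n : ℕ} [NeZero n]

lemma fin_cast_ne_zero {a : ℕ} (ha : 0 < a) (han : a < n) : ((a : ℕ) : Fin n) ≠ 0 := by
  intro h
  have h0 : ((a : ℕ) : Fin n).val = 0 := by rw [h]; rfl
  rw [Fin.val_natCast, Nat.mod_eq_of_lt han] at h0
  omega

lemma cyc_two_ne_zero (hn : 3 ≤ n) : (2 : Fin n) ≠ 0 := by
  have : (2 : Fin n) = ((2 : ℕ) : Fin n) := by norm_cast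
  rw [this]
  exact fin_cast_ne_zero (by omega) (by omega)

lemma cyc_one_ne_zero (hn : 3 ≤ n) : (1 : Fin n) ≠ 0 := by
  have : (1 : Fin n) = ((1 : ℕ) : Fin n) := by norm_cast
  rw [this]
  exact fin_cast_ne_zero (by omega) (by omega)

lemma fin_sub_eq_iff_left (a b : Fin n) : a - b = 1 ↔ b = a - 1 := by
  constructor
  · intro h
    rw [← h]
    ring
  · intro h
    rw [h]
    ring

lemma fin_sub_eq_iff_right (a b : Fin n) : a - b = 1 ↔ a = b + 1 := by
  constructor
  · intro h
    rw [← h]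
    ring
  · intro h
    rw [h]
    ring

lemma cyc_nbhd (hn : 3 ≤ n) (u w : Fin n) :
    (cycleGraph n).Adj u w ↔ (w = u - 1 ∨ w = u + 1) := by
  have h1 : (1 : Fin n).val = 1 := by
    have e : (1 : Fin n) = ((1 : ℕ) : Fin n) := by norm_cast
    rw [e, Fin.val_natCast, Nat.mod_eq_of_lt (by omega)]
  have e1 : ∀ a b : Fin n, ((a - b).val = 1 ↔ a - b = 1) := by
    intro a b
    rw [Fin.ext_iff, h1]
  rw [cycleGraph_adj', e1, e1, fin_sub_eq_iff_left u w, fin_sub_eq_iff_right w u]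

lemma cyc_sub_ne_add (hn : 3 ≤ n) (u : Fin n) : u - 1 ≠ u + 1 := by
  intro h
  apply cyc_two_ne_zero hn
  rw [← show (u + 1) - (u - 1) = (2 : Fin n) from by ring, ← h, sub_self]

lemma cyc_ne_add_one (hn : 3 ≤ n) (u : Fin n) : u ≠ u + 1 := by
  intro h
  apply cyc_one_ne_zero hn
  rw [← show (u + 1) - u = (1 : Fin n) from by ring, ← h, sub_self]

lemma cyc_ne_sub_one (hn : 3 ≤ n) (u : Fin n) : u ≠ u - 1 := by
  intro h
  apply cyc_one_ne_zero hn
  rw [← show u - (u - 1) = (1 : Fin n) from by ring, ← h, sub_self]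

lemma cyc_adj_add_one (hn : 3 ≤ n) (u : Fin n) : (cycleGraph n).Adj u (u + 1) :=
  (cyc_nbhd hn u (u+1)).2 (Or.inr rfl)

lemma cyc_adj_sub_one (hn : 3 ≤ n) (u : Fin n) : (cycleGraph n).Adj u (u - 1) :=
  (cyc_nbhd hn u (u-1)).2 (Or.inl rfl)

lemma cyc_adj_pm_iff (hn : 3 ≤ n) (u : Fin n) :
    (cycleGraph n).Adj (u - 1) (u + 1) ↔ n = 3 := by
  rw [cyc_nbhd hn]
  constructor
  · rintro (h | h)
    · have h3 : ((3 : ℕ) : Fin n) = 0 := by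
        rw [← show (u + 1) - (u - 1 - 1) = ((3 : ℕ) : Fin n) from by push_cast; ring, ← h,
          sub_self]
      have h0 : ((3 : ℕ) : Fin n).val = 0 := by rw [h3]; rfl
      rw [Fin.val_natCast] at h0
      have hd : n ∣ 3 := Nat.dvd_of_mod_eq_zero h0
      have := Nat.le_of_dvd (by omega) hd
      omega
    · exfalso
      apply cyc_one_ne_zero hn
      rw [← show (u + 1) - ((u - 1) + 1) = (1 : Fin n) from by ring, ← h, sub_self]
  · rintro rfl
    left
    have h3 : (3 : Fin 3) = 0 := by norm_cast
    have key2 : (u : Fin 3) - 1 - 1 = u + 1 - (3 : Fin 3) := by ring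
    rw [h3, sub_zero] at key2
    exact key2.symm

end Cycle

lemma sigmaGraph_adj_fst {ι : Type*} {Vf : ι → Type*} {Gs : ∀ i, SimpleGraph (Vf i)}
    {x y : Σ i, Vf i} (h : (sigmaGraph Gs).Adj x y) : x.1 = y.1 := by
  obtain ⟨i, u, v, rfl, rfl, -⟩ := h
  rfl

section Concrete

variable {t q s : ℕ} {k : Fin t → ℕ}

local notation "Wty" => ((Σ i, Fin (k i)) ⊕ ((Σ _ : Fin q, Fin 2) ⊕ Fin s))
local notation "Hgr" => ((sigmaGraph fun i => cycleGraph (k i)) ⊕g (K2s q ⊕g (⊥ : SimpleGraph (Fin s))))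

lemma coneCycles_eq : coneCycles k q s = cone Hgr := rfl

lemma fin2_adj_iff (x y : Fin 2) : (⊤ : SimpleGraph (Fin 2)).Adj x y ↔ y = x + 1 := by
  revert x y; decide

variable [∀ i, NeZero (k i)]

section NB
variable [DecidableEq (Option ((Σ i, Fin (k i)) ⊕ ((Σ _ : Fin q, Fin 2) ⊕ Fin s)))]
variable [DecidableRel (coneCycles k q s).Adj]

lemma nb_cyc (hk : ∀ i, 3 ≤ k i) (i : Fin t) (u : Fin (k i)) :
    (coneCycles k q s).neighborFinset (some (Sum.inl ⟨i, u⟩))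
      = ({none, some (Sum.inl ⟨i, u - 1⟩), some (Sum.inl ⟨i, u + 1⟩)}
          : Finset (Option ((Σ i, Fin (k i)) ⊕ ((Σ _ : Fin q, Fin 2) ⊕ Fin s)))) := by
  ext x
  rcases x with _ | x
  · rw [SimpleGraph.mem_neighborFinset]
    simp [coneCycles_eq]
  · rw [SimpleGraph.mem_neighborFinset]
    simp only [SimpleGraph.mem_neighborFinset, coneCycles_eq, cone_adj_some_some,
      Finset.mem_insert, Finset.mem_singleton, Option.some.injEq, reduceCtorEq, false_or]
    rcases x with (⟨j, w⟩ | b)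
    · simp only [SimpleGraph.sum_adj, Sum.inl.injEq]
      by_cases hij : i = j
      · subst hij
        rw [sigmaGraph_adj_mk, cyc_nbhd (hk i) u w]
        constructor
        · rintro (rfl | rfl)
          · exact Or.inl rfl
          · exact Or.inr rfl
        · rintro (h | h)
          · exact Or.inl (sigma_mk_injective (i := i) h)
          · exact Or.inr (sigma_mk_injective (i := i) h)
      · constructor
        · intro h
          exact absurd (sigmaGraph_adj_fst h) hij
        · rintro (h | h) <;>
            · exact absurd (congrArg Sigma.fst h).symm hij
    · simp

lemma nb_K2 (j : Fin q) (x : Fin 2) :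
    (coneCycles k q s).neighborFinset (some (Sum.inr (Sum.inl ⟨j, x⟩)))
      = ({none, some (Sum.inr (Sum.inl ⟨j, x + 1⟩))}
          : Finset (Option ((Σ i, Fin (k i)) ⊕ ((Σ _ : Fin q, Fin 2) ⊕ Fin s)))) := by
  ext y
  rcases y with _ | y
  · rw [SimpleGraph.mem_neighborFinset]
    simp [coneCycles_eq]
  · rw [SimpleGraph.mem_neighborFinset]
    simp only [SimpleGraph.mem_neighborFinset, coneCycles_eq, cone_adj_some_some,
      Finset.mem_insert, Finset.mem_singleton, Option.some.injEq, reduceCtorEq, false_or]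
    rcases y with (a | (⟨j', y'⟩ | c))
    · simp
    · simp only [SimpleGraph.sum_adj, Sum.inr.injEq, Sum.inl.injEq]
      by_cases hjj : j = j'
      · subst hjj
        rw [K2s, sigmaGraph_adj_mk, fin2_adj_iff]
        constructor
        · rintro rfl
          rfl
        · intro h
          exact sigma_mk_injective (i := j) h
      · constructor
        · intro h
          exact absurd (sigmaGraph_adj_fst h) hjj
        · intro h
          exact absurd (congrArg Sigma.fst h).symm hjj
    · simp

lemma nb_K1 (c : Fin s) :
    (coneCycles k q s).neighborFinset (some (Sum.inr (Sum.inr c)))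
      = ({none}
          : Finset (Option ((Σ i, Fin (k i)) ⊕ ((Σ _ : Fin q, Fin 2) ⊕ Fin s)))) := by
  ext y
  rcases y with _ | y
  · rw [SimpleGraph.mem_neighborFinset]
    simp [coneCycles_eq]
  · rw [SimpleGraph.mem_neighborFinset]
    simp only [SimpleGraph.mem_neighborFinset, coneCycles_eq, cone_adj_some_some,
      Finset.mem_singleton, reduceCtorEq, iff_false]
    rcases y with (a | (b | c'))
    · simp
    · simp
    · simp

lemma nb_none_mem (x : Option ((Σ i, Fin (k i)) ⊕ ((Σ _ : Fin q, Fin 2) ⊕ Fin s))) :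
    x ∈ (coneCycles k q s).neighborFinset none ↔ x ≠ none := by
  rcases x with _ | x
  · rw [SimpleGraph.mem_neighborFinset]
    simp [coneCycles_eq]
  · rw [SimpleGraph.mem_neighborFinset]
    simp [coneCycles_eq]


lemma deg_cc_none : deg (coneCycles k q s) none = (∑ i, k i) + 2*q + s := by
  rw [coneCycles_eq, deg_cone_none]
  rw [Fintype.card_sum, Fintype.card_sum, Fintype.card_sigma, Fintype.card_sigma]
  simp only [Fintype.card_fin, Finset.sum_const, Finset.card_univ, smul_eq_mul]
  omega

lemma deg_cc_cyc (hk : ∀ i, 3 ≤ k i) (i : Fin t) (u : Fin (k i)) :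
    deg (coneCycles k q s) (some (Sum.inl ⟨i, u⟩)) = 3 := by
  rw [coneCycles_eq, deg_cone_some, deg_sum_inl, deg_sigma, deg_cycle (hk i)]

lemma deg_cc_K2 (j : Fin q) (x : Fin 2) :
    deg (coneCycles k q s) (some (Sum.inr (Sum.inl ⟨j, x⟩))) = 2 := by
  rw [coneCycles_eq, deg_cone_some, deg_sum_inr, deg_sum_inl, deg_K2s]

lemma deg_cc_K1 (c : Fin s) :
    deg (coneCycles k q s) (some (Sum.inr (Sum.inr c))) = 1 := by
  rw [coneCycles_eq, deg_cone_some, deg_sum_inr, deg_sum_inr, deg_bot]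

lemma tri_cc_cyc (hk : ∀ i, 3 ≤ k i) (i : Fin t) (u : Fin (k i)) :
    triangleCountAt (coneCycles k q s) (some (Sum.inl ⟨i, u⟩))
      = if k i = 3 then 3 else 2 := by
  classical
  have hne : (some (Sum.inl (⟨i, u - 1⟩ : Σ i, Fin (k i)))
      : Option ((Σ i, Fin (k i)) ⊕ ((Σ _ : Fin q, Fin 2) ⊕ Fin s)))
      ≠ some (Sum.inl ⟨i, u + 1⟩) := by
    intro h
    exact cyc_sub_ne_add (hk i) u
      (sigma_mk_injective (i := i) (Sum.inl_injective (Option.some_injective _ h)))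
  rw [triangleCountAt_eq', tri_filter_card,
    tri_pc_three _ _ none (some (Sum.inl ⟨i, u - 1⟩)) (some (Sum.inl ⟨i, u + 1⟩))
      (nb_cyc hk i u) trivial trivial hne]
  have hiff : (coneCycles k q s).Adj (some (Sum.inl ⟨i, u - 1⟩)) (some (Sum.inl ⟨i, u + 1⟩))
      ↔ k i = 3 := by
    rw [show (coneCycles k q s).Adj (some (Sum.inl ⟨i, u - 1⟩)) (some (Sum.inl ⟨i, u + 1⟩))
        ↔ (sigmaGraph fun i => cycleGraph (k i)).Adj ⟨i, u - 1⟩ ⟨i, u + 1⟩ from Iff.rfl,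
      sigmaGraph_adj_mk, cyc_adj_pm_iff (hk i)]
  simp only [hiff]

lemma tri_cc_K2 (j : Fin q) (x : Fin 2) :
    triangleCountAt (coneCycles k q s) (some (Sum.inr (Sum.inl ⟨j, x⟩))) = 1 := by
  classical
  rw [triangleCountAt_eq', tri_filter_card,
    tri_pc_two _ _ none (some (Sum.inr (Sum.inl ⟨j, x + 1⟩))) (nb_K2 j x) trivial]

lemma tri_cc_K1 (c : Fin s) :
    triangleCountAt (coneCycles k q s) (some (Sum.inr (Sum.inr c))) = 0 := by
  classical
  rw [triangleCountAt_eq', tri_filter_card, tri_pc_one _ _ none (nb_K1 c)]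


lemma tri_cc_none (hk : ∀ i, 3 ≤ k i) :
    triangleCountAt (coneCycles k q s) none = (∑ i, k i) + q := by
  classical
  rw [triangleCountAt_eq', tri_filter_card]
  have hcard : ((((coneCycles k q s).neighborFinset none).powersetCard 2).filter
      (fun p => ∀ a ∈ p, ∀ b ∈ p, a ≠ b → (coneCycles k q s).Adj a b)).card
      = (univ : Finset ((Σ i, Fin (k i)) ⊕ Fin q)).card := by
    refine (Finset.card_bij
      (fun a _ => Sum.elim
        (fun (p : Σ i, Fin (k i)) =>
          ({some (Sum.inl ⟨p.1, p.2⟩), some (Sum.inl ⟨p.1, p.2 + 1⟩)}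
            : Finset (Option ((Σ i, Fin (k i)) ⊕ ((Σ _ : Fin q, Fin 2) ⊕ Fin s)))))
        (fun (j : Fin q) =>
          {some (Sum.inr (Sum.inl ⟨j, 0⟩)), some (Sum.inr (Sum.inl ⟨j, 1⟩))}) a)
      ?_ ?_ ?_).symm
    -- membership
    · rintro (⟨i, u⟩ | j) -
      · simp only [Sum.elim_inl]
        rw [Finset.mem_filter, Finset.mem_powersetCard]
        refine ⟨⟨?_, ?_⟩, ?_⟩
        · intro x hx
          rw [nb_none_mem]
          rcases Finset.mem_insert.1 hx with rfl | hx
          · simp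
          · rw [Finset.mem_singleton] at hx
            subst hx
            simp
        · rw [Finset.card_pair]
          intro h
          exact cyc_ne_add_one (hk i) u
            (sigma_mk_injective (i := i) (Sum.inl_injective (Option.some_injective _ h)))
        · intro a ha b hb hab
          rcases Finset.mem_insert.1 ha with rfl | ha
          · rcases Finset.mem_insert.1 hb with rfl | hb
            · exact absurd rfl hab
            · rw [Finset.mem_singleton] at hb
              subst hb
              exact (sigmaGraph_adj_mk _).2 (cyc_adj_add_one (hk i) u)
          · rw [Finset.mem_singleton] at ha
            subst ha
            rcases Finset.mem_insert.1 hb with rfl | hb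
            · exact ((sigmaGraph_adj_mk (Gs := fun i => cycleGraph (k i)) (i := i)).2
                (cyc_adj_add_one (hk i) u)).symm
            · rw [Finset.mem_singleton] at hb
              subst hb
              exact absurd rfl hab
      · simp only [Sum.elim_inr]
        rw [Finset.mem_filter, Finset.mem_powersetCard]
        refine ⟨⟨?_, ?_⟩, ?_⟩
        · intro x hx
          rw [nb_none_mem]
          rcases Finset.mem_insert.1 hx with rfl | hx
          · simp
          · rw [Finset.mem_singleton] at hx
            subst hx
            simp
        · rw [Finset.card_pair]
          simp
        · intro a ha b hb hab
          rcases Finset.mem_insert.1 ha with rfl | ha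
          · rcases Finset.mem_insert.1 hb with rfl | hb
            · exact absurd rfl hab
            · rw [Finset.mem_singleton] at hb
              subst hb
              exact (sigmaGraph_adj_mk _).2 (by decide)
          · rw [Finset.mem_singleton] at ha
            subst ha
            rcases Finset.mem_insert.1 hb with rfl | hb
            · exact (sigmaGraph_adj_mk (Gs := fun _ : Fin q => (⊤ : SimpleGraph (Fin 2)))
                (i := j) (u := (1 : Fin 2)) (w := (0 : Fin 2))).2 (by decide)
            · rw [Finset.mem_singleton] at hb
              subst hb
              exact absurd rfl hab
    -- injectivity
    · intro a ha b hb h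
      rcases a with ⟨i, u⟩ | j <;> rcases b with ⟨i', u'⟩ | j'
      · simp only [Sum.elim_inl] at h
        have h1 : (some (Sum.inl ⟨i, u⟩)
            : Option ((Σ i, Fin (k i)) ⊕ ((Σ _ : Fin q, Fin 2) ⊕ Fin s)))
            ∈ ({some (Sum.inl ⟨i', u'⟩), some (Sum.inl ⟨i', u' + 1⟩)}
              : Finset (Option ((Σ i, Fin (k i)) ⊕ ((Σ _ : Fin q, Fin 2) ⊕ Fin s)))) := by
          rw [← h]
          exact Finset.mem_insert_self _ _
        have h2 : (some (Sum.inl ⟨i, u + 1⟩)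
            : Option ((Σ i, Fin (k i)) ⊕ ((Σ _ : Fin q, Fin 2) ⊕ Fin s)))
            ∈ ({some (Sum.inl ⟨i', u'⟩), some (Sum.inl ⟨i', u' + 1⟩)}
              : Finset (Option ((Σ i, Fin (k i)) ⊕ ((Σ _ : Fin q, Fin 2) ⊕ Fin s)))) := by
          rw [← h]
          exact Finset.mem_insert_of_mem (Finset.mem_singleton_self _)
        simp only [Finset.mem_insert, Finset.mem_singleton, Option.some.injEq,
          Sum.inl.injEq] at h1 h2
        rcases h1 with h1 | h1
        · have hii : i = i' := congrArg Sigma.fst h1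
          subst hii
          rw [sigma_mk_injective (i := i) h1]
        · have hii : i = i' := congrArg Sigma.fst h1
          subst hii
          have hu1 : u = u' + 1 := sigma_mk_injective (i := i) h1
          rcases h2 with h2 | h2
          · have hu2 : u + 1 = u' := sigma_mk_injective (i := i) h2
            exfalso
            apply cyc_two_ne_zero (hk i)
            have e1 : u' + 1 + 1 = u' := by rw [← hu1]; exact hu2
            calc (2 : Fin (k i)) = (u' + 1 + 1) - u' := by ring
              _ = u' - u' := by rw [e1]
              _ = 0 := sub_self _
          · have hu2 : u + 1 = u' + 1 := sigma_mk_injective (i := i) h2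
            have hu3 : u = u' := add_right_cancel hu2
            exfalso
            rw [hu3] at hu1
            exact cyc_ne_add_one (hk i) u' hu1
      · exfalso
        simp only [Sum.elim_inl, Sum.elim_inr] at h
        have h1 : (some (Sum.inl ⟨i, u⟩)
            : Option ((Σ i, Fin (k i)) ⊕ ((Σ _ : Fin q, Fin 2) ⊕ Fin s)))
            ∈ ({some (Sum.inr (Sum.inl ⟨j', 0⟩)), some (Sum.inr (Sum.inl ⟨j', 1⟩))}
              : Finset (Option ((Σ i, Fin (k i)) ⊕ ((Σ _ : Fin q, Fin 2) ⊕ Fin s)))) := by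
          rw [← h]
          exact Finset.mem_insert_self _ _
        simp at h1
      · exfalso
        simp only [Sum.elim_inl, Sum.elim_inr] at h
        have h1 : (some (Sum.inr (Sum.inl ⟨j, 0⟩))
            : Option ((Σ i, Fin (k i)) ⊕ ((Σ _ : Fin q, Fin 2) ⊕ Fin s)))
            ∈ ({some (Sum.inl ⟨i', u'⟩), some (Sum.inl ⟨i', u' + 1⟩)}
              : Finset (Option ((Σ i, Fin (k i)) ⊕ ((Σ _ : Fin q, Fin 2) ⊕ Fin s)))) := by
          rw [← h]
          exact Finset.mem_insert_self _ _
        simp at h1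
      · simp only [Sum.elim_inr] at h
        have h1 : (some (Sum.inr (Sum.inl ⟨j, 0⟩))
            : Option ((Σ i, Fin (k i)) ⊕ ((Σ _ : Fin q, Fin 2) ⊕ Fin s)))
            ∈ ({some (Sum.inr (Sum.inl ⟨j', 0⟩)), some (Sum.inr (Sum.inl ⟨j', 1⟩))}
              : Finset (Option ((Σ i, Fin (k i)) ⊕ ((Σ _ : Fin q, Fin 2) ⊕ Fin s)))) := by
          rw [← h]
          exact Finset.mem_insert_self _ _
        simp only [Finset.mem_insert, Finset.mem_singleton, Option.some.injEq,
          Sum.inr.injEq, Sum.inl.injEq] at h1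
        rcases h1 with h1 | h1
        · exact congrArg Sum.inr (congrArg Sigma.fst h1)
        · have hjj : j = j' := congrArg Sigma.fst h1
          subst hjj
          have : (0 : Fin 2) = 1 := sigma_mk_injective (i := j) h1
          simp at this
    -- surjectivity
    · intro p hp
      rw [Finset.mem_filter, Finset.mem_powersetCard] at hp
      obtain ⟨⟨hsub, hcard2⟩, hadj⟩ := hp
      obtain ⟨x, y, hxy, rfl⟩ := Finset.card_eq_two.1 hcard2
      have hx : x ≠ none := (nb_none_mem x).1 (hsub (Finset.mem_insert_self _ _))
      have hy : y ≠ none :=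
        (nb_none_mem y).1 (hsub (Finset.mem_insert_of_mem (Finset.mem_singleton_self _)))
      have hxyadj := hadj x (Finset.mem_insert_self _ _)
        y (Finset.mem_insert_of_mem (Finset.mem_singleton_self _)) hxy
      rcases x with _ | a
      · exact absurd rfl hx
      rcases y with _ | b
      · exact absurd rfl hy
      have hab : ((sigmaGraph fun i => cycleGraph (k i)) ⊕g
          (K2s q ⊕g (⊥ : SimpleGraph (Fin s)))).Adj a b := hxyadj
      rcases a with (⟨i, u⟩ | (⟨j, x'⟩ | c)) <;> rcases b with (⟨i', w⟩ | (⟨j', y'⟩ | c'))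
      · -- cycle-cycle
        have hA : (sigmaGraph fun i => cycleGraph (k i)).Adj ⟨i, u⟩ ⟨i', w⟩ := hab
        have hii : i = i' := sigmaGraph_adj_fst hA
        subst hii
        rw [sigmaGraph_adj_mk, cyc_nbhd (hk i)] at hA
        rcases hA with rfl | rfl
        · refine ⟨Sum.inl ⟨i, u - 1⟩, Finset.mem_univ _, ?_⟩
          simp only [Sum.elim_inl]
          rw [sub_add_cancel]
          exact Finset.pair_comm _ _
        · exact ⟨Sum.inl ⟨i, u⟩, Finset.mem_univ _, rfl⟩
      · exact absurd hab (by simp)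
      · exact absurd hab (by simp)
      · exact absurd hab (by simp)
      · -- K2-K2
        have hB : (K2s q).Adj ⟨j, x'⟩ ⟨j', y'⟩ := hab
        have hjj : j = j' := sigmaGraph_adj_fst hB
        subst hjj
        rw [K2s, sigmaGraph_adj_mk, fin2_adj_iff] at hB
        subst hB
        refine ⟨Sum.inr j, Finset.mem_univ _, ?_⟩
        simp only [Sum.elim_inr]
        by_cases hx0 : x' = 0
        · subst hx0
          rfl
        · have hx1 : x' = 1 := Fin.eq_one_of_ne_zero x' hx0
          subst hx1
          rw [show (1 : Fin 2) + 1 = 0 by decide]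
          exact Finset.pair_comm _ _
      · exact absurd hab (by simp)
      · exact absurd hab (by simp)
      · exact absurd hab (by simp)
      · exact absurd hab (by simp)
  rw [hcard, Finset.card_univ, Fintype.card_sum, Fintype.card_sigma]
  simp


end NB
end Concrete

/-- Lemma 4.2 (iii): for `G = K₁ ∨ (C_{k₁} ∪ ⋯ ∪ C_{k_t} ∪ q K₂ ∪ s K₁)` of order `n`,
`∑_v t_G(v) d_G(v) = (n+5)(n-s-1) - q(n+7) + 9 |{i : k_i = 3}|`; in particular, if no
`k_i` equals `3`, the sum is `(n+5)(n-s-1) - q(n+7)`. -/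
theorem triangle_degree_sum_coneCycles
    (t q s n : ℕ) (ht : 1 ≤ t) (hq : 1 ≤ q) (hs : 1 ≤ s)
    (k : Fin t → ℕ) (hk : ∀ i, 3 ≤ k i)
    (hn : n = Fintype.card (Option ((Σ i, Fin (k i)) ⊕ ((Σ _ : Fin q, Fin 2) ⊕ Fin s)))) :
    (∑ v : Option ((Σ i, Fin (k i)) ⊕ ((Σ _ : Fin q, Fin 2) ⊕ Fin s)),
        (triangleCountAt (coneCycles k q s) v : ℤ) * (deg (coneCycles k q s) v : ℤ)) =
      ((n : ℤ) + 5) * ((n : ℤ) - (s : ℤ) - 1) - (q : ℤ) * ((n : ℤ) + 7)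
        + 9 * ((Finset.univ.filter fun i => k i = 3).card : ℤ) ∧
    ((∀ i, k i ≠ 3) →
      (∑ v : Option ((Σ i, Fin (k i)) ⊕ ((Σ _ : Fin q, Fin 2) ⊕ Fin s)),
          (triangleCountAt (coneCycles k q s) v : ℤ) * (deg (coneCycles k q s) v : ℤ)) =
        ((n : ℤ) + 5) * ((n : ℤ) - (s : ℤ) - 1) - (q : ℤ) * ((n : ℤ) + 7)) := by
  haveI : ∀ i, NeZero (k i) := fun i => ⟨by have := hk i; omega⟩
  letI : DecidableEq (Option ((Σ i, Fin (k i)) ⊕ ((Σ _ : Fin q, Fin 2) ⊕ Fin s))) :=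
    Classical.decEq _
  letI : DecidableRel (coneCycles k q s).Adj := Classical.decRel _
  have hnval : (n : ℤ) = ((∑ i, k i : ℕ) : ℤ) + 2 * q + s + 1 := by
    rw [hn, Fintype.card_option, Fintype.card_sum, Fintype.card_sum, Fintype.card_sigma,
      Fintype.card_sigma]
    simp only [Fintype.card_fin, Finset.sum_const, Finset.card_univ, smul_eq_mul]
    push_cast
    ring
  have main : (∑ v : Option ((Σ i, Fin (k i)) ⊕ ((Σ _ : Fin q, Fin 2) ⊕ Fin s)),
        (triangleCountAt (coneCycles k q s) v : ℤ) * (deg (coneCycles k q s) v : ℤ)) =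
      ((n : ℤ) + 5) * ((n : ℤ) - (s : ℤ) - 1) - (q : ℤ) * ((n : ℤ) + 7)
        + 9 * ((Finset.univ.filter fun i => k i = 3).card : ℤ) := by
    have hcyc : (∑ x : Σ i, Fin (k i),
        (triangleCountAt (coneCycles k q s) (some (Sum.inl x)) : ℤ)
          * (deg (coneCycles k q s) (some (Sum.inl x)) : ℤ))
        = 6 * ((∑ i, k i : ℕ) : ℤ)
          + 9 * ((Finset.univ.filter fun i => k i = 3).card : ℤ) := by
      rw [← Finset.univ_sigma_univ, Finset.sum_sigma]
      have step : ∀ i : Fin t, (∑ u : Fin (k i),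
          (triangleCountAt (coneCycles k q s) (some (Sum.inl ⟨i, u⟩)) : ℤ)
            * (deg (coneCycles k q s) (some (Sum.inl ⟨i, u⟩)) : ℤ))
          = 6 * (k i : ℤ) + (if k i = 3 then (9 : ℤ) else 0) := by
        intro i
        have hbody : ∀ u : Fin (k i),
            (triangleCountAt (coneCycles k q s) (some (Sum.inl ⟨i, u⟩)) : ℤ)
              * (deg (coneCycles k q s) (some (Sum.inl ⟨i, u⟩)) : ℤ)
            = 6 + (if k i = 3 then (3 : ℤ) else 0) := by
          intro u
          rw [tri_cc_cyc hk i u, deg_cc_cyc hk i u]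
          by_cases h3 : k i = 3
          · rw [if_pos h3, if_pos h3]
            norm_num
          · rw [if_neg h3, if_neg h3]
            norm_num
        rw [Finset.sum_congr rfl (fun u _ => hbody u), Finset.sum_const, Finset.card_univ,
          Fintype.card_fin, nsmul_eq_mul]
        by_cases h3 : k i = 3
        · rw [if_pos h3, if_pos h3, h3]
          norm_num
        · rw [if_neg h3, if_neg h3]
          ring
      rw [Finset.sum_congr rfl (fun i _ => step i), Finset.sum_add_distrib,
        Finset.sum_ite, Finset.sum_const_zero, add_zero, Finset.sum_const, nsmul_eq_mul]
      have e1 : (∑ i : Fin t, 6 * (k i : ℤ)) = 6 * ((∑ i, k i : ℕ) : ℤ) := by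
        push_cast
        rw [Finset.mul_sum]
      rw [e1]
      ring
    have hK2sum : (∑ x : Σ _ : Fin q, Fin 2,
        (triangleCountAt (coneCycles k q s) (some (Sum.inr (Sum.inl x))) : ℤ)
          * (deg (coneCycles k q s) (some (Sum.inr (Sum.inl x))) : ℤ))
        = 4 * (q : ℤ) := by
      rw [← Finset.univ_sigma_univ, Finset.sum_sigma]
      simp only [tri_cc_K2, deg_cc_K2]
      simp only [Finset.sum_const, Finset.card_univ, Fintype.card_fin, nsmul_eq_mul]
      push_cast
      ring
    rw [Fintype.sum_option, Fintype.sum_sum_type, Fintype.sum_sum_type, hcyc, hK2sum]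
    simp only [tri_cc_none hk, deg_cc_none, tri_cc_K1, deg_cc_K1, Nat.cast_zero, zero_mul,
      Finset.sum_const_zero, add_zero]
    rw [hnval]
    push_cast
    ring
  refine ⟨main, fun hne => ?_⟩
  rw [main]
  have : (Finset.univ.filter fun i => k i = 3) = ∅ :=
    Finset.filter_eq_empty_iff.2 (fun {i} _ => hne i)
  rw [this]
  simp


end Paper
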